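/- Every locally compact Hausdorff band of topological groups is a normal topological space. -/

import Mathlib

open Set TopologicalSpace

/-- The principal left ideal (with `a` adjoined) generated by `a`: `{a} ∪ {s*a : s ∈ S}`. -/
def leftIdeal {S : Type*} [Semigroup S] (a : S) : Set S :=
  insert a {x | ∃ s, x = s * a}

/-- The principal right ideal (with `a` adjoined) generated by `a`: `{a} ∪ {a*s : s ∈ S}`. -/
def rightIdeal {S : Type*} [Semigroup S] (a : S) : Set S :=
  insert a {x | ∃ s, x = a * s}

/-- Green's relation ℋ on a semigroup. -/
def greenH {S : Type*} [Semigroup S] (a b : S) : Prop :=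
  leftIdeal a = leftIdeal b ∧ rightIdeal a = rightIdeal b

/-- The ℋ-class of an element. -/
def HClass {S : Type*} [Semigroup S] (x : S) : Set S := {y | greenH y x}

/-- A semigroup is completely regular if every element is completely regular. -/
def CompletelyRegularSemigroup (S : Type*) [Semigroup S] : Prop :=
  ∀ a : S, ∃ x, a = a * x * a ∧ a * x = x * a

/-- Green's relation ℋ is a congruence. -/
def HIsCongruence (S : Type*) [Semigroup S] : Prop :=
  ∀ a b c : S, greenH a b → greenH (a * c) (b * c) ∧ greenH (c * a) (c * b)

/-- A cryptogroup is a completely regular semigroup in which ℋ is a congruence. -/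
def IsCryptogroup (S : Type*) [Semigroup S] : Prop :=
  CompletelyRegularSemigroup S ∧ HIsCongruence S

/-- In a cryptogroup every ℋ-class is a group; `idp x` (written `x⁰`) is the identity of the
ℋ-class of `x`, and `inv x` (written `x⁻¹`) is the inverse of `x` inside its ℋ-class. -/
structure CryptoOps (S : Type*) [Semigroup S] where
  idp : S → S
  inv : S → S
  idp_mem : ∀ x, greenH (idp x) x
  idp_mul : ∀ x y, greenH y x → idp x * y = y
  mul_idp : ∀ x y, greenH y x → y * idp x = y
  inv_mem : ∀ x, greenH (inv x) x
  mul_inv : ∀ x, x * inv x = idp x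
  inv_mul : ∀ x, inv x * x = idp x

/-- The set `E(S)` of idempotents of a semigroup. -/
def idemSet (S : Type*) [Semigroup S] : Set S := {e | e * e = e}

/-- `(xU)* = {y ∈ S : x⁻¹*y ∈ U and x⁰ = y⁰}`. -/
def lstar {S : Type*} [Semigroup S] (ops : CryptoOps S) (x : S) (U : Set S) : Set S :=
  {y | ops.inv x * y ∈ U ∧ ops.idp x = ops.idp y}

/-- `(Ux)* = {y ∈ S : y*x⁻¹ ∈ U and x⁰ = y⁰}`. -/
def rstar {S : Type*} [Semigroup S] (ops : CryptoOps S) (U : Set S) (x : S) : Set S :=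
  {y | y * ops.inv x ∈ U ∧ ops.idp x = ops.idp y}

/-- `(AB)* = ⋃_{a ∈ A} (aB)*`. -/
def setStar {S : Type*} [Semigroup S] (ops : CryptoOps S) (A B : Set S) : Set S :=
  ⋃ a ∈ A, lstar ops a B

/-- A full subcryptogroup: contains all idempotents, and closed under multiplication
and inversion. -/
def IsFullSubcryptogroup {S : Type*} [Semigroup S] (ops : CryptoOps S) (K : Set S) : Prop :=
  idemSet S ⊆ K ∧ (∀ x ∈ K, ∀ y ∈ K, x * y ∈ K) ∧ (∀ x ∈ K, ops.inv x ∈ K)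

section Aux

open scoped Pointwise

lemma greenH_refl {S : Type*} [Semigroup S] (a : S) : greenH a a := ⟨rfl, rfl⟩

lemma greenH_symm {S : Type*} [Semigroup S] {a b : S} (h : greenH a b) : greenH b a :=
  ⟨h.1.symm, h.2.symm⟩

lemma greenH_trans {S : Type*} [Semigroup S] {a b c : S} (h : greenH a b) (h' : greenH b c) :
    greenH a c := ⟨h.1.trans h'.1, h.2.trans h'.2⟩

/-- If a space is partitioned into open subsets each of which is a normal subspace,
then the whole space is normal. -/
lemma normal_of_partition {X : Type*} [TopologicalSpace X] (P : X → Set X)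
    (hmem : ∀ x, x ∈ P x) (hcl : ∀ x y, y ∈ P x → P y = P x)
    (hP : ∀ x, IsOpen (P x)) (hnorm : ∀ x, NormalSpace (P x)) : NormalSpace X := by
  constructor
  intro s t hs ht hst
  have key : ∀ x : X, ∃ U V : Set X, IsOpen U ∧ IsOpen V ∧ U ⊆ P x ∧ V ⊆ P x ∧
      s ∩ P x ⊆ U ∧ t ∩ P x ⊆ V ∧ Disjoint U V := by
    intro x
    obtain ⟨U, V, hU, hV, hsU, htV, hUV⟩ := (hnorm x).normal
      (Subtype.val ⁻¹' s) (Subtype.val ⁻¹' t)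
      (hs.preimage continuous_subtype_val) (ht.preimage continuous_subtype_val)
      (hst.preimage _)
    refine ⟨Subtype.val '' U, Subtype.val '' V, (hP x).isOpenMap_subtype_val _ hU,
      (hP x).isOpenMap_subtype_val _ hV, ?_, ?_, ?_, ?_, ?_⟩
    · rintro _ ⟨a, _, rfl⟩; exact a.2
    · rintro _ ⟨a, _, rfl⟩; exact a.2
    · rintro y ⟨hy1, hy2⟩; exact ⟨⟨y, hy2⟩, hsU hy1, rfl⟩
    · rintro y ⟨hy1, hy2⟩; exact ⟨⟨y, hy2⟩, htV hy1, rfl⟩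
    · rw [Set.disjoint_left]
      rintro _ ⟨a, ha, rfl⟩ ⟨b, hb, hab⟩
      have : b = a := Subtype.ext hab
      exact hUV.le_bot ⟨ha, this ▸ hb⟩
  choose u v huo hvo huP hvP hsu htv huv using key
  let st : Setoid X := ⟨fun a b => P a = P b, ⟨fun _ => rfl, Eq.symm, Eq.trans⟩⟩
  let r : X → X := fun x => (Quotient.mk st x).out
  have hrP : ∀ x, P (r x) = P x := fun x =>
    (@Quotient.exact _ st _ _ (Quotient.out_eq (Quotient.mk st x)) : P _ = P x)
  have hrr : ∀ x y, P x = P y → r x = r y := fun x y h =>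
    congrArg Quotient.out (@Quotient.sound _ st _ _ h)
  refine ⟨⋃ x, u (r x), ⋃ x, v (r x), isOpen_iUnion fun x => huo _,
    isOpen_iUnion fun x => hvo _, ?_, ?_, ?_⟩
  · intro y hy
    exact Set.mem_iUnion.2 ⟨y, hsu (r y) ⟨hy, (hrP y).symm ▸ hmem y⟩⟩
  · intro y hy
    exact Set.mem_iUnion.2 ⟨y, htv (r y) ⟨hy, (hrP y).symm ▸ hmem y⟩⟩
  · rw [Set.disjoint_left]
    intro z hz1 hz2
    obtain ⟨a, hza⟩ := Set.mem_iUnion.1 hz1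
    obtain ⟨b, hzb⟩ := Set.mem_iUnion.1 hz2
    have h1 : P z = P (r a) := hcl (r a) z (huP _ hza)
    have h2 : P z = P (r b) := hcl (r b) z (hvP _ hzb)
    have hab : r a = r b := by
      have e1 : r (r a) = r a := hrr _ _ (hrP a)
      have e2 : r (r b) = r b := hrr _ _ (hrP b)
      have := hrr (r a) (r b) (h1.symm.trans h2)
      rwa [e1, e2] at this
    exact (huv (r a)).le_bot ⟨hza, hab ▸ hzb⟩

/-- Every locally compact Hausdorff topological group is a normal space. -/
lemma normal_of_topGroup {G : Type*} [Group G] [TopologicalSpace G] [IsTopologicalGroup G]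
    [LocallyCompactSpace G] [T2Space G] : NormalSpace G := by
  obtain ⟨K, hKc, hK1⟩ := exists_compact_mem_nhds (1 : G)
  set W : Set G := interior K ∩ (interior K)⁻¹ with hWdef
  have h1int : (1 : G) ∈ interior K := mem_interior_iff_mem_nhds.2 hK1
  have hWo : IsOpen W := isOpen_interior.inter isOpen_interior.inv
  have hW1 : (1 : G) ∈ W := ⟨h1int, by simpa using h1int⟩
  have hWsymm : W⁻¹ = W := by
    rw [hWdef, Set.inter_inv, inv_inv, Set.inter_comm]
  have hWK : W ⊆ K := fun x hx => interior_subset hx.1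
  set H : Subgroup G := Subgroup.closure W with hHdef
  have hHo : IsOpen (H : Set G) :=
    Subgroup.isOpen_of_mem_nhds H
      (Filter.mem_of_superset (hWo.mem_nhds hW1) Subgroup.subset_closure)
  have hHcl : IsClosed (H : Set G) := H.isClosed_of_isOpen hHo
  set C : Set G := closure W with hCdef
  have hCc : IsCompact C := hKc.of_isClosed_subset isClosed_closure
    (closure_minimal hWK hKc.isClosed)
  have hCsymm : C⁻¹ = C := by
    rw [hCdef, inv_closure, hWsymm]
  have hCH : C ⊆ (H : Set G) := closure_minimal Subgroup.subset_closure hHcl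
  have hpow_c : ∀ n : ℕ, IsCompact (C ^ n) := by
    intro n
    induction n with
    | zero => rw [pow_zero, ← Set.singleton_one]; exact isCompact_singleton
    | succ n ih => rw [pow_succ]; exact ih.mul hCc
  have hpow_H : ∀ n : ℕ, C ^ n ⊆ (H : Set G) := by
    intro n
    induction n with
    | zero =>
      rw [pow_zero]
      intro x hx
      rw [Set.mem_one] at hx
      exact hx ▸ H.one_mem
    | succ n ih =>
      rw [pow_succ]
      rintro _ ⟨a, ha, b, hb, rfl⟩
      exact H.mul_mem (ih ha) (hCH hb)
  have hHunion : (H : Set G) = ⋃ n : ℕ, C ^ n := by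
    apply Set.Subset.antisymm
    · intro x hx
      refine Subgroup.closure_induction (fun y hy => ?_) ?_ ?_ ?_ hx
      · exact Set.mem_iUnion.2 ⟨1, by rw [pow_one]; exact subset_closure hy⟩
      · exact Set.mem_iUnion.2 ⟨0, by rw [pow_zero]; exact Set.mem_one.2 rfl⟩
      · rintro a b _ _ ha hb
        obtain ⟨m, hm⟩ := Set.mem_iUnion.1 ha
        obtain ⟨n, hn⟩ := Set.mem_iUnion.1 hb
        exact Set.mem_iUnion.2 ⟨m + n, by rw [pow_add]; exact Set.mul_mem_mul hm hn⟩
      · rintro a _ ha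
        obtain ⟨n, hn⟩ := Set.mem_iUnion.1 ha
        refine Set.mem_iUnion.2 ⟨n, ?_⟩
        have : a⁻¹ ∈ (C ^ n)⁻¹ := Set.inv_mem_inv.2 hn
        rwa [← inv_pow, hCsymm] at this
    · exact Set.iUnion_subset hpow_H
  refine normal_of_partition (fun x => x • (H : Set G)) ?_ ?_ ?_ ?_
  · intro x
    exact ⟨1, H.one_mem, by simp⟩
  · rintro x _ ⟨h, hh, rfl⟩
    show (x • h) • (H : Set G) = x • (H : Set G)
    rw [smul_eq_mul, mul_smul, smul_coe_set hh]
  · intro x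
    exact hHo.smul x
  · intro x
    haveI : LocallyCompactSpace ↥(x • (H : Set G)) := (hHo.smul x).locallyCompactSpace
    haveI : SigmaCompactSpace ↥(x • (H : Set G)) := by
      refine isSigmaCompact_iff_sigmaCompactSpace.mp
        ⟨fun n => x • C ^ n, fun n => (hpow_c n).smul x, ?_⟩
      rw [← Set.smul_set_iUnion, ← hHunion]
    show NormalSpace ↥(x • (H : Set G))
    exact inferInstance

end Aux

/-- Every locally compact Hausdorff band of topological groups is normal. -/
theorem stmt11 {S : Type*} [Semigroup S] [TopologicalSpace S] [ContinuousMul S]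
    (ops : CryptoOps S) (hcrypt : IsCryptogroup S)
    (hinv : Continuous ops.inv) (hopen : ∀ x : S, IsOpen (HClass x))
    [LocallyCompactSpace S] [T2Space S] :
    NormalSpace S := by
  obtain ⟨-, hcong⟩ := hcrypt
  -- `x ℋ x*x`
  have hsq : ∀ x : S, greenH (x * x) x := by
    intro x
    have h1 : greenH (ops.idp x) x := ops.idp_mem x
    have h2 : greenH (x * ops.idp x) (x * x) := (hcong _ _ x h1).2
    have h3 : x * ops.idp x = x := ops.mul_idp x x (greenH_refl x)
    rw [h3] at h2
    exact greenH_symm h2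
  have hmulmem : ∀ {x a b : S}, greenH a x → greenH b x → greenH (a * b) x := by
    intro x a b ha hb
    have h1 : greenH (a * b) (a * x) := (hcong _ _ a hb).2
    have h2 : greenH (a * x) (x * x) := (hcong _ _ x ha).1
    exact greenH_trans (greenH_trans h1 h2) (hsq x)
  have hidp_eq : ∀ {x y : S}, greenH y x → ops.idp y = ops.idp x := by
    intro x y h
    have h1 : greenH (ops.idp x) y := greenH_trans (ops.idp_mem x) (greenH_symm h)
    have h2 : greenH (ops.idp y) x := greenH_trans (ops.idp_mem y) h
    have e1 : ops.idp y * ops.idp x = ops.idp x := ops.idp_mul y (ops.idp x) h1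
    have e2 : ops.idp y * ops.idp x = ops.idp y := ops.mul_idp x (ops.idp y) h2
    rw [e1] at e2
    exact e2.symm
  refine normal_of_partition HClass (fun x => greenH_refl x)
    (fun x y hy => ?_) hopen (fun e => ?_)
  · ext z
    exact ⟨fun hz => greenH_trans hz hy, fun hz => greenH_trans hz (greenH_symm hy)⟩
  · -- `HClass e` is a locally compact Hausdorff topological group, hence normal.
    letI : Mul (HClass e) := ⟨fun a b => ⟨a.1 * b.1, hmulmem a.2 b.2⟩⟩
    letI : One (HClass e) := ⟨⟨ops.idp e, ops.idp_mem e⟩⟩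
    letI : Inv (HClass e) := ⟨fun a => ⟨ops.inv a.1, greenH_trans (ops.inv_mem a.1) a.2⟩⟩
    letI : Group (HClass e) := Group.ofLeftAxioms
      (fun a b c => Subtype.ext (mul_assoc a.1 b.1 c.1))
      (fun a => Subtype.ext (ops.idp_mul e a.1 a.2))
      (fun a => Subtype.ext (by
        show ops.inv a.1 * a.1 = ops.idp e
        rw [ops.inv_mul a.1, hidp_eq a.2]))
    letI : IsTopologicalGroup (HClass e) :=
      { continuous_mul := Continuous.subtype_mk
          (((continuous_subtype_val.comp continuous_fst).mul
            (continuous_subtype_val.comp continuous_snd))) _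
        continuous_inv := (hinv.comp continuous_subtype_val).subtype_mk _ }
    haveI : LocallyCompactSpace (HClass e) := (hopen e).locallyCompactSpace
    exact normal_of_topGroup
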